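/- For every integer b ≥ 1 and every nonempty open interval I ⊆ (0,∞), there exist uncountably many Liouville numbers ζ ∈ I such that ζ^{1/b} is also a Liouville number. -/

import Mathlib

open Finset in
lemma my_pow_sub_pow_abs_le {x y M : ℝ} (hx : |x| ≤ M) (hy : |y| ≤ M) (n : ℕ) :
    |x ^ n - y ^ n| ≤ n * M ^ (n - 1) * |x - y| := by
  have hM : 0 ≤ M := (abs_nonneg x).trans hx
  rw [← geom_sum₂_mul x y n, abs_mul]
  have hsum : |∑ i ∈ range n, x ^ i * y ^ (n - 1 - i)| ≤ n * M ^ (n - 1) := by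
    refine (Finset.abs_sum_le_sum_abs _ _).trans ?_
    have h1 : ∀ i ∈ range n, |x ^ i * y ^ (n - 1 - i)| ≤ M ^ (n - 1) := by
      intro i hi
      rw [abs_mul, abs_pow, abs_pow]
      calc |x| ^ i * |y| ^ (n - 1 - i) ≤ M ^ i * M ^ (n - 1 - i) :=
            mul_le_mul (pow_le_pow_left₀ (abs_nonneg x) hx i)
              (pow_le_pow_left₀ (abs_nonneg y) hy _) (by positivity) (by positivity)
        _ = M ^ (n - 1) := by
            rw [← pow_add]; congr 1
            have := Finset.mem_range.mp hi; omega
    calc ∑ i ∈ range n, |x ^ i * y ^ (n - 1 - i)| ≤ ∑ _i ∈ range n, M ^ (n - 1) :=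
          Finset.sum_le_sum h1
      _ = n * M ^ (n - 1) := by simp [mul_comm]
  exact mul_le_mul_of_nonneg_right hsum (abs_nonneg _)

lemma liouville_pow {x : ℝ} (hx : Liouville x) {b : ℕ} (hb : 1 ≤ b) :
    Liouville (x ^ b) := by
  intro n
  set M : ℝ := |x| + 1 with hM
  have hMpos : 0 < M := by positivity
  have hCpos : (0:ℝ) < b * M ^ (b - 1) := by positivity
  obtain ⟨m, hm⟩ := pow_unbounded_of_one_lt (b * M ^ (b - 1)) (one_lt_two (α := ℝ))
  obtain ⟨p, q, hq, hne, hlt⟩ := hx (n * b + m)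
  have hq0 : (0:ℝ) < (q:ℝ) := by exact_mod_cast hq.trans_le' (by norm_num)
  have hq1 : (1:ℝ) ≤ (q:ℝ) := by exact_mod_cast hq.le
  have hqpow : (0:ℝ) < (q:ℝ) ^ (n * b + m) := by positivity
  have hb0 : b ≠ 0 := by omega
  refine ⟨p ^ b, q ^ b, ?_, ?_, ?_⟩
  · exact one_lt_pow₀ hq hb0
  · -- x ^ b ≠ (p/q)^b
    intro h
    have hcast : ((p ^ b : ℤ) : ℝ) / ((q ^ b : ℤ) : ℝ) = ((p:ℝ) / q) ^ b := by
      push_cast; rw [div_pow]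
    rw [hcast] at h
    have habs : |x| ^ b = |(p:ℝ)/q| ^ b := by
      rw [← abs_pow, ← abs_pow, h]
    have : |x| = |(p:ℝ)/q| :=
      (pow_left_inj₀ (abs_nonneg x) (abs_nonneg _) hb0).mp habs
    have hxrat : x = (p:ℝ)/q ∨ x = -((p:ℝ)/q) := abs_eq_abs.mp this
    have hirr : Irrational x := hx.irrational
    rcases hxrat with h' | h'
    · refine (hirr ?_).elim
      exact ⟨(p : ℚ)/(q : ℚ), by push_cast; rw [h']⟩
    · refine (hirr ?_).elim
      exact ⟨-((p : ℚ)/(q : ℚ)), by push_cast; rw [h']⟩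
  · have hcast : ((p ^ b : ℤ) : ℝ) / ((q ^ b : ℤ) : ℝ) = ((p:ℝ) / q) ^ b := by
      push_cast; rw [div_pow]
    rw [hcast]
    have hxM : |x| ≤ M := by simp [hM]
    have hlt1 : |x - (p:ℝ)/q| < 1 := by
      refine hlt.trans_le ?_
      rw [div_le_one hqpow]
      exact one_le_pow₀ hq1
    have hpqM : |(p:ℝ)/q| ≤ M := by
      have := abs_sub_abs_le_abs_sub ((p:ℝ)/q) x
      rw [abs_sub_comm] at hlt1
      simp only [hM]
      nlinarith [abs_nonneg ((p:ℝ)/q - x)]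
    calc |x ^ b - ((p:ℝ)/q) ^ b| ≤ b * M ^ (b - 1) * |x - (p:ℝ)/q| :=
          my_pow_sub_pow_abs_le hxM hpqM b
      _ ≤ (2:ℝ) ^ m * |x - (p:ℝ)/q| :=
          mul_le_mul_of_nonneg_right hm.le (abs_nonneg _)
      _ < (2:ℝ) ^ m * (1 / (q:ℝ) ^ (n * b + m)) :=
          mul_lt_mul_of_pos_left hlt (by positivity)
      _ ≤ (q:ℝ) ^ m * (1 / (q:ℝ) ^ (n * b + m)) :=
          mul_le_mul_of_nonneg_right
            (pow_le_pow_left₀ (by norm_num) (by exact_mod_cast hq) m) (by positivity)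
      _ = 1 / (q:ℝ) ^ (n * b) := by
          rw [pow_add]; field_simp
      _ = 1 / ((q ^ b : ℤ) : ℝ) ^ n := by
          push_cast
          rw [← pow_mul, mul_comm]

theorem uncountably_many_liouville_with_liouville_root
    (b : ℕ) (hb : 1 ≤ b) (c d : ℝ) (hc : 0 ≤ c) (hcd : c < d) :
    ∃ E : Set ℝ, E ⊆ Set.Ioo c d ∧ ¬E.Countable ∧
      ∀ ζ ∈ E, Liouville ζ ∧ Liouville (ζ ^ ((b : ℝ)⁻¹)) := by
  have hb0 : (b:ℝ) ≠ 0 := Nat.cast_ne_zero.mpr (by omega)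
  have hbinv : (0:ℝ) < (b:ℝ)⁻¹ := by positivity
  set c' : ℝ := c ^ ((b:ℝ)⁻¹) with hc'
  set d' : ℝ := d ^ ((b:ℝ)⁻¹) with hd'
  have hc'0 : 0 ≤ c' := Real.rpow_nonneg hc _
  have hc'd' : c' < d' := Real.rpow_lt_rpow hc hcd hbinv
  have hc'b : c' ^ b = c := by
    rw [hc', ← Real.rpow_natCast (c ^ _) b, ← Real.rpow_mul hc,
      inv_mul_cancel₀ hb0, Real.rpow_one]
  have hd'b : d' ^ b = d := by
    rw [hd', ← Real.rpow_natCast (d ^ _) b,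
      ← Real.rpow_mul (hc.trans hcd.le), inv_mul_cancel₀ hb0, Real.rpow_one]
  set F : Set ℝ := {y | Liouville y} ∩ Set.Ioo c' d' with hF
  refine ⟨(fun y => y ^ b) '' F, ?_, ?_, ?_⟩
  · rintro _ ⟨y, ⟨hyL, hy1, hy2⟩, rfl⟩
    constructor
    · rw [← hc'b]
      exact pow_lt_pow_left₀ hy1 hc'0 (by omega)
    · rw [← hd'b]
      exact pow_lt_pow_left₀ hy2 (hc'0.trans hy1.le) (by omega)
  · intro hcount
    have hinj : Set.InjOn (fun y => y ^ b) F := by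
      intro u hu v hv huv
      exact (pow_left_inj₀ (le_of_lt (hc'0.trans_lt hu.2.1))
        (le_of_lt (hc'0.trans_lt hv.2.1)) (by omega)).mp huv
    have hFc : F.Countable :=
      (Set.mapsTo_image (fun y => y ^ b) F).countable_of_injOn hinj hcount
    have hres : Fᶜ ∈ residual ℝ := by
      have : Fᶜ = ⋂ x ∈ F, ({x}ᶜ : Set ℝ) := by
        rw [← Set.compl_iUnion₂, Set.biUnion_of_singleton]
      rw [this]
      exact (countable_bInter_mem hFc).mpr fun x _ =>
        residual_of_dense_open isOpen_compl_singleton (dense_compl_singleton x)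
    have hL : {y : ℝ | Liouville y} ∈ residual ℝ := eventually_residual_liouville
    have hdense : Dense ({y : ℝ | Liouville y} ∩ Fᶜ) :=
      dense_of_mem_residual (Filter.inter_mem hL hres)
    obtain ⟨x, ⟨hxL, hxF⟩, hxI⟩ := hdense.exists_mem_open isOpen_Ioo
      (Set.nonempty_Ioo.mpr hc'd')
    exact hxF ⟨hxL, hxI⟩
  · rintro _ ⟨y, ⟨hyL, hy1, hy2⟩, rfl⟩
    have hy0 : 0 < y := hc'0.trans_lt hy1
    have hroot : (y ^ b) ^ ((b:ℝ)⁻¹) = y := by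
      rw [← Real.rpow_natCast y b, ← Real.rpow_mul hy0.le,
        mul_inv_cancel₀ hb0, Real.rpow_one]
    refine ⟨liouville_pow hyL hb, ?_⟩
    rw [hroot]
    exact hyL
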